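/- Let g : ℝⁿ → (−∞, +∞] be proper and lower semicontinuous, let γ > 0 and α ∈ (3/2, 2]. Suppose for each index j, the point v^j is a global minimizer of v ↦ g(v) + (1/(2γ))‖αu^j − v − x^j‖², and suppose u^j → u*, x^j → x*, v^j → v* as j → ∞. Then g(v^j) → g(v*). -/

import Mathlib

open scoped InnerProductSpace RealInnerProductSpace
open Filter Topology

/-- if `v^j` minimizes `v ↦ g(v) + (1/(2γ))‖αu^j − v − x^j‖²` and
`u^j → u*`, `x^j → x*`, `v^j → v*`, then `g(v^j) → g(v*)`. -/
theorem g_tendsto_of_minimizers {n : ℕ} (γ α : ℝ) (hγ : 0 < γ) (hα : 3/2 < α ∧ α ≤ 2)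
    (g : EuclideanSpace ℝ (Fin n) → EReal)
    (hg_lsc : LowerSemicontinuous g) (hg_bot : ∀ w, g w ≠ ⊥) (hg_proper : ∃ w, g w ≠ ⊤)
    (u v x : ℕ → EuclideanSpace ℝ (Fin n))
    (ustar xstar vstar : EuclideanSpace ℝ (Fin n))
    (hmin : ∀ j : ℕ, ∀ w,
        g (v j) + (((1/(2*γ)) * ‖α • u j - v j - x j‖^2 : ℝ) : EReal)
        ≤ g w + (((1/(2*γ)) * ‖α • u j - w - x j‖^2 : ℝ) : EReal))
    (hu : Tendsto u atTop (𝓝 ustar))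
    (hx : Tendsto x atTop (𝓝 xstar))
    (hv : Tendsto v atTop (𝓝 vstar)) :
    Tendsto (fun j => g (v j)) atTop (𝓝 (g vstar)) := by
  set c : ℕ → ℝ := fun j =>
    (1/(2*γ)) * ‖α • u j - vstar - x j‖^2 - (1/(2*γ)) * ‖α • u j - v j - x j‖^2 with hc
  have hc0 : Tendsto c atTop (𝓝 0) := by
    have h1 : Tendsto (fun j => ‖α • u j - vstar - x j‖^2) atTop
        (𝓝 (‖α • ustar - vstar - xstar‖^2)) :=
      ((((hu.const_smul α).sub tendsto_const_nhds).sub hx).norm.pow 2)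
    have h2 : Tendsto (fun j => ‖α • u j - v j - x j‖^2) atTop
        (𝓝 (‖α • ustar - vstar - xstar‖^2)) :=
      ((((hu.const_smul α).sub hv).sub hx).norm.pow 2)
    have := (h1.const_mul (1/(2*γ))).sub (h2.const_mul (1/(2*γ)))
    simpa only [sub_self] using this
  have hub : ∀ j, g (v j) ≤ g vstar + ((c j : ℝ) : EReal) := by
    intro j
    have h := hmin j vstar
    have h2 := add_le_add_left h ((-((1/(2*γ)) * ‖α • u j - v j - x j‖^2) : ℝ) : EReal)
    calc g (v j) = g (v j) + (((1/(2*γ)) * ‖α • u j - v j - x j‖^2 : ℝ) : EReal)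
            + ((-((1/(2*γ)) * ‖α • u j - v j - x j‖^2) : ℝ) : EReal) := by
          rw [add_assoc, ← EReal.coe_add]
          simp
      _ ≤ g vstar + (((1/(2*γ)) * ‖α • u j - vstar - x j‖^2 : ℝ) : EReal)
            + ((-((1/(2*γ)) * ‖α • u j - v j - x j‖^2) : ℝ) : EReal) := h2
      _ = g vstar + ((c j : ℝ) : EReal) := by
          rw [add_assoc, ← EReal.coe_add]
          congr 1
  have hliminf : g vstar ≤ liminf (fun j => g (v j)) atTop := by
    rw [le_liminf_iff]
    intro b hb
    exact hv.eventually (hg_lsc vstar b hb)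
  have hlimsup : limsup (fun j => g (v j)) atTop ≤ g vstar := by
    have ht : Tendsto (fun j => g vstar + ((c j : ℝ) : EReal)) atTop (𝓝 (g vstar)) := by
      rcases eq_or_ne (g vstar) ⊤ with h | h
      · simp only [h, EReal.top_add_coe]
        exact tendsto_const_nhds
      · obtain ⟨r, hr⟩ : ∃ r : ℝ, g vstar = (r : EReal) := by
          lift g vstar to ℝ using ⟨h, hg_bot vstar⟩ with r
          exact ⟨r, rfl⟩
        rw [hr]
        have : Tendsto (fun j => ((r + c j : ℝ) : EReal)) atTop (𝓝 ((r : ℝ) : EReal)) := by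
          rw [EReal.tendsto_coe]
          simpa using (tendsto_const_nhds.add hc0)
        simpa [EReal.coe_add] using this
    calc limsup (fun j => g (v j)) atTop
        ≤ limsup (fun j => g vstar + ((c j : ℝ) : EReal)) atTop :=
          limsup_le_limsup (Eventually.of_forall hub)
      _ = g vstar := ht.limsup_eq
  exact tendsto_of_le_liminf_of_limsup_le hliminf hlimsup
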